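/- Let D : H → H be γ-cocoercive with γ ∈ (0,1) and (1/γ)-Lipschitz, let t ∈ (0,1) with t ≤ (1−2γ)/(2−2γ), and set Dᵗ = tD + (1−t)I, a = Dᵗ(x) − Dᵗ(y), b = x − y. Then ‖b − a‖² ≤ (t²(1−γ)²/(t+γ−tγ)²)‖a‖² for all x,y ∈ H. -/

import Mathlib

set_option maxHeartbeats 800000


open RealInnerProductSpace

theorem case2_key_inequality
    {H : Type*} [NormedAddCommGroup H] [InnerProductSpace ℝ H]
    (D : H → H) (γ t : ℝ) (hγ0 : 0 < γ) (hγ1 : γ < 1)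
    (ht0 : 0 < t) (ht1 : t < 1) (htl : t ≤ (1 - 2 * γ) / (2 - 2 * γ))
    (hcoco : ∀ x y : H, ⟪x - y, D x - D y⟫ ≥ γ * ‖D x - D y‖ ^ 2)
    (hlip : ∀ x y : H, ‖D x - D y‖ ≤ (1 / γ) * ‖x - y‖) :
    ∀ x y : H,
      ‖(x - y) - ((t • D x + (1 - t) • x) - (t • D y + (1 - t) • y))‖ ^ 2 ≤
        (t ^ 2 * (1 - γ) ^ 2 / (t + γ - t * γ) ^ 2) *
          ‖(t • D x + (1 - t) • x) - (t • D y + (1 - t) • y)‖ ^ 2 := by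
  intro x y
  set u : H := D x - D y with hu
  set v : H := x - y with hv
  -- step-size bound gives 2*(t+γ-t*γ) ≤ 1
  have hden : (0:ℝ) < 2 - 2 * γ := by linarith
  have hs : 2 * (t + γ - t * γ) ≤ 1 := by
    have h2 : t * (2 - 2 * γ) ≤ 1 - 2 * γ := by
      calc t * (2 - 2 * γ) ≤ ((1 - 2 * γ) / (2 - 2 * γ)) * (2 - 2 * γ) := by
            exact mul_le_mul_of_nonneg_right htl (le_of_lt hden)
        _ = 1 - 2 * γ := by
          have h1g : (1:ℝ) - γ ≠ 0 := ne_of_gt (by linarith)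
          field_simp
    nlinarith
  have hspos : (0:ℝ) < t + γ - t * γ := by nlinarith
  -- vector identities
  have hb : (x - y) - ((t • D x + (1 - t) • x) - (t • D y + (1 - t) • y))
      = t • (v - u) := by rw [hu, hv]; module
  have ha : (t • D x + (1 - t) • x) - (t • D y + (1 - t) • y)
      = t • u + (1 - t) • v := by rw [hu, hv]; module
  rw [hb, ha]
  -- abbreviations
  set A := ‖u‖ ^ 2 with hA
  set B := ‖v‖ ^ 2 with hB
  set P := ⟪v, u⟫ with hP
  have hAnn : 0 ≤ A := by positivity
  have hBnn : 0 ≤ B := by positivity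
  have hcoc : P ≥ γ * A := hcoco x y
  have hl : γ ^ 2 * A ≤ B := by
    have h1 : γ * ‖u‖ ≤ ‖v‖ := by
      have := hlip x y
      rw [div_mul_eq_mul_div, le_div_iff₀ hγ0] at this
      linarith [this]
    have h2 := pow_le_pow_left₀ (by positivity) h1 2
    rw [mul_pow] at h2
    exact h2
  -- compute the two squared norms
  have hn1 : ‖t • (v - u)‖ ^ 2 = t ^ 2 * (B - 2 * P + A) := by
    rw [norm_smul, mul_pow, Real.norm_eq_abs, sq_abs, norm_sub_sq_real]
    try ring
  have hn2 : ‖t • u + (1 - t) • v‖ ^ 2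
      = t ^ 2 * A + 2 * t * (1 - t) * P + (1 - t) ^ 2 * B := by
    rw [norm_add_sq_real, norm_smul, norm_smul, real_inner_smul_left,
      real_inner_smul_right, mul_pow, mul_pow, Real.norm_eq_abs,
      Real.norm_eq_abs, sq_abs, sq_abs, hP, real_inner_comm v u]
    try ring
  rw [hn1, hn2]
  rw [div_mul_eq_mul_div, le_div_iff₀ (by positivity : (0:ℝ) < (t + γ - t * γ) ^ 2)]
  nlinarith [mul_nonneg (by nlinarith : (0:ℝ) ≤ 1 - 2 * (t + γ - t * γ))
      (by nlinarith : (0:ℝ) ≤ B - γ ^ 2 * A),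
    mul_nonneg (by nlinarith : (0:ℝ) ≤ t + γ - t * γ - γ + (t + γ - t * γ) * γ)
      (by nlinarith : (0:ℝ) ≤ P - γ * A),
    sq_nonneg t, mul_pos ht0 hγ0]
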